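/- (Eckart–Young, as used.) Let K be an n × n real symmetric positive definite matrix with spectral decomposition K = U D Uᵀ, where U is orthogonal and D is diagonal with entries d(1,1) ≥ d(2,2) ≥ … ≥ d(n,n) > 0 in descending order. For 1 ≤ m < n let K_m = U_m D_m U_mᵀ, where U_m consists of the first m columns of U and D_m is the top-left m × m block of D. Then for every n × n real matrix B of rank at most m, ‖K − K_m‖₂ ≤ ‖K − B‖₂ and ‖K − K_m‖_F ≤ ‖K − B‖_F; moreover ‖K − K_m‖₂ = d(m+1, m+1) and ‖K − K_m‖_F² = Σ_{j=m+1}^n d(j,j)². -/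

import Mathlib

open Matrix

noncomputable section

/-- Euclidean norm of a vector. -/
def vecNorm {n : ℕ} (v : Fin n → ℝ) : ℝ := Real.sqrt (∑ i, v i ^ 2)

/-- The spectral (operator) norm `‖A‖₂ = max { ‖Av‖ : ‖v‖ = 1 }`. -/
def specNorm {n m : ℕ} (A : Matrix (Fin n) (Fin m) ℝ) : ℝ :=
  sSup { t | ∃ v : Fin m → ℝ, vecNorm v = 1 ∧ t = vecNorm (A.mulVec v) }

/-- The Frobenius norm `‖A‖_F = √(∑ᵢⱼ A i j ²)`. -/
def frobNorm {n m : ℕ} (A : Matrix (Fin n) (Fin m) ℝ) : ℝ :=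
  Real.sqrt (∑ i, ∑ j, A i j ^ 2)

lemma vecNorm_nonneg {n : ℕ} (v : Fin n → ℝ) : 0 ≤ vecNorm v := Real.sqrt_nonneg _

lemma vecNorm_sq {n : ℕ} (v : Fin n → ℝ) : vecNorm v ^ 2 = ∑ i, v i ^ 2 := by
  rw [vecNorm, Real.sq_sqrt]; positivity

lemma frobNorm_nonneg {n m : ℕ} (A : Matrix (Fin n) (Fin m) ℝ) : 0 ≤ frobNorm A :=
  Real.sqrt_nonneg _

lemma frobNorm_sq {n m : ℕ} (A : Matrix (Fin n) (Fin m) ℝ) :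
    frobNorm A ^ 2 = ∑ i, ∑ j, A i j ^ 2 := by
  rw [frobNorm, Real.sq_sqrt]; positivity

lemma sum_sq_eq_dot {n : ℕ} (v : Fin n → ℝ) : (∑ i, v i ^ 2) = v ⬝ᵥ v := by
  simp [dotProduct, sq]

lemma vecNorm_mulVec_orth {n : ℕ} {U : Matrix (Fin n) (Fin n) ℝ} (hU : Uᵀ * U = 1)
    (w : Fin n → ℝ) : vecNorm (U *ᵥ w) = vecNorm w := by
  unfold vecNorm
  congr 1
  rw [sum_sq_eq_dot, sum_sq_eq_dot, Matrix.dotProduct_mulVec,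
    ← Matrix.mulVec_transpose, Matrix.mulVec_mulVec, hU, Matrix.one_mulVec]

lemma frobSq_eq_trace {n : ℕ} (A : Matrix (Fin n) (Fin n) ℝ) :
    (∑ i, ∑ j, A i j ^ 2) = Matrix.trace (Aᵀ * A) := by
  simp only [Matrix.trace, Matrix.diag, Matrix.mul_apply, Matrix.transpose_apply, sq]
  rw [Finset.sum_comm]

lemma frob_conj {n : ℕ} {U : Matrix (Fin n) (Fin n) ℝ} (hU₁ : Uᵀ * U = 1)
    (A : Matrix (Fin n) (Fin n) ℝ) :
    frobNorm (U * A * Uᵀ) = frobNorm A := by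
  unfold frobNorm
  congr 1
  rw [frobSq_eq_trace, frobSq_eq_trace]
  have : (U * A * Uᵀ)ᵀ * (U * A * Uᵀ) = U * (Aᵀ * A) * Uᵀ := by
    have h := hU₁
    simp only [Matrix.transpose_mul, Matrix.transpose_transpose, Matrix.mul_assoc]
    rw [← Matrix.mul_assoc Uᵀ U, hU₁, Matrix.one_mul]
  rw [this, Matrix.trace_mul_comm (U * (Aᵀ * A)) Uᵀ, ← Matrix.mul_assoc, Matrix.trace_mul_comm,
    Matrix.mul_assoc, hU₁, Matrix.mul_one]

lemma sum_castLE {M : Type*} [AddCommMonoid M] {n m : ℕ} (h : m ≤ n) (F : Fin n → M)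
    (hF : ∀ k : Fin n, ¬ ((k : ℕ) < m) → F k = 0) :
    ∑ k : Fin n, F k = ∑ j : Fin m, F (Fin.castLE h j) := by
  classical
  have h1 : ∑ j : Fin m, F (Fin.castLE h j)
      = ∑ k ∈ Finset.univ.map (Fin.castLEEmb h), F k := by
    rw [Finset.sum_map]; rfl
  rw [h1]
  symm
  apply Finset.sum_subset (Finset.subset_univ _)
  intro k _ hk
  apply hF
  intro hlt
  exact hk (Finset.mem_map.2 ⟨⟨(k : ℕ), hlt⟩, Finset.mem_univ _, by simp⟩)

lemma conj_diag_apply {n m : ℕ} (U : Matrix (Fin n) (Fin m) ℝ) (d : Fin m → ℝ) (i j : Fin n) :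
    (U * Matrix.diagonal d * Uᵀ) i j = ∑ k, U i k * d k * U j k := by
  rw [Matrix.mul_apply]
  simp [Matrix.mul_diagonal]

lemma KmKdiff {n m : ℕ} (hmn : m < n) (K U : Matrix (Fin n) (Fin n) ℝ) (dvec : Fin n → ℝ)
    (hK : K = U * Matrix.diagonal dvec * Uᵀ)
    (Um : Matrix (Fin n) (Fin m) ℝ) (hUm : Um = U.submatrix id (Fin.castLE hmn.le))
    (Dm : Matrix (Fin m) (Fin m) ℝ)
    (hDm : Dm = Matrix.diagonal fun i : Fin m => dvec (Fin.castLE hmn.le i))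
    (Km : Matrix (Fin n) (Fin n) ℝ) (hKm : Km = Um * Dm * Umᵀ) :
    K - Km = U * Matrix.diagonal (fun i : Fin n => if m ≤ (i : ℕ) then dvec i else 0) * Uᵀ := by
  have hKm' : Km = U * Matrix.diagonal (fun i : Fin n => if (i : ℕ) < m then dvec i else 0) * Uᵀ := by
    subst hUm hDm hKm
    ext i j
    rw [conj_diag_apply, conj_diag_apply]
    rw [sum_castLE hmn.le (fun k => U i k * (if (k : ℕ) < m then dvec k else 0) * U j k)
      (by intro k hk; simp [if_neg hk])]
    simp [Matrix.submatrix_apply, Fin.is_lt]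
  rw [hK, hKm']
  rw [← Matrix.sub_mul, ← Matrix.mul_sub, Matrix.diagonal_sub]
  have hfun : (fun i : Fin n => dvec i - if (i : ℕ) < m then dvec i else 0)
      = (fun i : Fin n => if m ≤ (i : ℕ) then dvec i else 0) := by
    funext i
    by_cases h : (i : ℕ) < m
    · rw [if_pos h, if_neg (Nat.not_le.2 h), sub_self]
    · rw [if_neg h, if_pos (Nat.not_lt.1 h), sub_zero]
  exact congrArg (fun f => U * Matrix.diagonal f * Uᵀ) hfun

lemma vec_bound {n m : ℕ} (A : Matrix (Fin n) (Fin m) ℝ) (v : Fin m → ℝ) (hv : vecNorm v = 1) :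
    vecNorm (A *ᵥ v) ≤ frobNorm A := by
  have hv2 : (∑ j, v j ^ 2) = 1 := by
    have := vecNorm_sq v; rw [hv] at this; simpa using this.symm
  have h1 : vecNorm (A *ᵥ v) ^ 2 ≤ frobNorm A ^ 2 := by
    rw [vecNorm_sq, frobNorm_sq]
    apply Finset.sum_le_sum
    intro i _
    calc (A *ᵥ v) i ^ 2 = (∑ j, A i j * v j) ^ 2 := by rw [Matrix.mulVec, dotProduct]
      _ ≤ (∑ j, A i j ^ 2) * (∑ j, v j ^ 2) := Finset.sum_mul_sq_le_sq_mul_sq _ _ _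
      _ = ∑ j, A i j ^ 2 := by rw [hv2, mul_one]
  have := vecNorm_nonneg (A *ᵥ v)
  have := frobNorm_nonneg A
  nlinarith

lemma spec_nonempty {n m : ℕ} (hm : 0 < m) (A : Matrix (Fin n) (Fin m) ℝ) :
    { t | ∃ v : Fin m → ℝ, vecNorm v = 1 ∧ t = vecNorm (A.mulVec v) }.Nonempty := by
  refine ⟨vecNorm (A *ᵥ Pi.single ⟨0, hm⟩ 1), Pi.single ⟨0, hm⟩ 1, ?_, rfl⟩
  rw [vecNorm]
  have h1 : (∑ i : Fin m, (Pi.single (⟨0, hm⟩ : Fin m) (1:ℝ) : Fin m → ℝ) i ^ 2) = 1 := by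
    simp [Pi.single_apply]
  rw [h1, Real.sqrt_one]

lemma spec_bddAbove {n m : ℕ} (A : Matrix (Fin n) (Fin m) ℝ) :
    BddAbove { t | ∃ v : Fin m → ℝ, vecNorm v = 1 ∧ t = vecNorm (A.mulVec v) } := by
  refine ⟨frobNorm A, fun t ht => ?_⟩
  obtain ⟨v, hv, rfl⟩ := ht
  exact vec_bound A v hv

lemma specNorm_ge {n m : ℕ} (A : Matrix (Fin n) (Fin m) ℝ) (v : Fin m → ℝ)
    (hv : vecNorm v = 1) : vecNorm (A *ᵥ v) ≤ specNorm A :=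
  le_csSup (spec_bddAbove A) ⟨v, hv, rfl⟩

lemma vecNorm_single {m : ℕ} (j : Fin m) : vecNorm (Pi.single j (1:ℝ)) = 1 := by
  rw [vecNorm]
  have h1 : (∑ i : Fin m, (Pi.single j (1:ℝ) : Fin m → ℝ) i ^ 2) = 1 := by
    simp [Pi.single_apply]
  rw [h1, Real.sqrt_one]

lemma spec_conj_diag {n : ℕ} (U : Matrix (Fin n) (Fin n) ℝ)
    (hU₁ : Uᵀ * U = 1) (hU₂ : U * Uᵀ = 1) (e : Fin n → ℝ) (j₀ : Fin n)
    (he0 : ∀ i, 0 ≤ e i) (hle : ∀ i, e i ≤ e j₀) :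
    specNorm (U * Matrix.diagonal e * Uᵀ) = e j₀ := by
  have hUt : Uᵀᵀ * Uᵀ = 1 := by rwa [Matrix.transpose_transpose]
  have hA : ∀ v : Fin n → ℝ, (U * Matrix.diagonal e * Uᵀ) *ᵥ v
      = U *ᵥ (Matrix.diagonal e *ᵥ (Uᵀ *ᵥ v)) := by
    intro v; rw [Matrix.mulVec_mulVec, Matrix.mulVec_mulVec]
  have hub : ∀ t ∈ { t | ∃ v : Fin n → ℝ, vecNorm v = 1 ∧
      t = vecNorm ((U * Matrix.diagonal e * Uᵀ).mulVec v) }, t ≤ e j₀ := by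
    rintro t ⟨v, hv, rfl⟩
    rw [hA, vecNorm_mulVec_orth hU₁]
    set w := Uᵀ *ᵥ v with hwdef
    have hw : vecNorm w = 1 := by rw [hwdef, vecNorm_mulVec_orth hUt, hv]
    have hw2 : (∑ i, w i ^ 2) = 1 := by
      have := vecNorm_sq w; rw [hw] at this; simpa using this.symm
    have hsq : vecNorm (Matrix.diagonal e *ᵥ w) ^ 2 ≤ e j₀ ^ 2 := by
      rw [vecNorm_sq]
      calc (∑ i, (Matrix.diagonal e *ᵥ w) i ^ 2) = ∑ i, (e i * w i) ^ 2 := by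
            simp [Matrix.mulVec_diagonal]
        _ ≤ ∑ i, e j₀ ^ 2 * w i ^ 2 := by
            apply Finset.sum_le_sum
            intro i _
            rw [mul_pow]
            exact mul_le_mul_of_nonneg_right (pow_le_pow_left₀ (he0 i) (hle i) 2) (sq_nonneg _)
        _ = e j₀ ^ 2 := by rw [← Finset.mul_sum, hw2, mul_one]
    have h0 := vecNorm_nonneg (Matrix.diagonal e *ᵥ w)
    nlinarith [he0 j₀]
  apply le_antisymm
  · exact Real.sSup_le hub (he0 j₀)
  · apply le_csSup (spec_bddAbove _)
    refine ⟨U *ᵥ Pi.single j₀ 1, by rw [vecNorm_mulVec_orth hU₁, vecNorm_single], ?_⟩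
    have hcol : Uᵀ *ᵥ (U *ᵥ Pi.single j₀ 1) = Pi.single j₀ 1 := by
      rw [Matrix.mulVec_mulVec, hU₁, Matrix.one_mulVec]
    rw [hA, hcol, vecNorm_mulVec_orth hU₁]
    rw [vecNorm]
    have h1 : (∑ i, (Matrix.diagonal e *ᵥ Pi.single j₀ 1) i ^ 2) = e j₀ ^ 2 := by
      simp [Matrix.mulVec_diagonal, Pi.single_apply, mul_ite]
    rw [h1, Real.sqrt_sq (he0 j₀)]

lemma frobSq_diag {n : ℕ} (e : Fin n → ℝ) :
    frobNorm (Matrix.diagonal e) ^ 2 = ∑ i, e i ^ 2 := by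
  rw [frobNorm_sq]
  have : ∀ i : Fin n, (∑ j, Matrix.diagonal e i j ^ 2) = e i ^ 2 := by
    intro i
    rw [Finset.sum_eq_single i]
    · simp
    · intro j _ hj; simp [Matrix.diagonal_apply_ne' e hj]
    · simp
  simp [this]

lemma card_filter_ge {n m : ℕ} (hmn : m ≤ n) :
    (Finset.univ.filter fun i : Fin n => m ≤ (i : ℕ)).card = n - m := by
  classical
  have h1 : ((Finset.univ.filter fun i : Fin n => m ≤ (i : ℕ)).card : ℕ)
      = ∑ i : Fin n, if m ≤ (i : ℕ) then 1 else 0 := by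
    rw [Finset.card_filter]
  rw [h1, Fin.sum_univ_eq_sum_range (fun k => if m ≤ k then 1 else 0) n]
  rw [← Finset.card_filter]
  have h2 : (Finset.range n).filter (fun k => m ≤ k) = Finset.Ico m n := by
    ext k; simp [Finset.mem_Ico, Finset.mem_range]; omega
  rw [h2, Nat.card_Ico]

lemma weight_lemma {n m : ℕ} (hmn : m < n) (a c : Fin n → ℝ)
    (ha : Antitone a) (ha0 : ∀ i, 0 ≤ a i) (hc0 : ∀ i, 0 ≤ c i) (hc1 : ∀ i, c i ≤ 1)
    (hsum : ∑ i, c i = ((n - m : ℕ) : ℝ)) :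
    (∑ i : Fin n, if m ≤ (i : ℕ) then a i else 0) ≤ ∑ i, a i * c i := by
  classical
  set t : Fin n := ⟨m, hmn⟩ with ht
  set s := Finset.univ.filter (fun i : Fin n => m ≤ (i : ℕ)) with hs
  have hsplit : (∑ i, a i * c i)
      = ∑ i ∈ s, a i * c i + ∑ i ∈ Finset.univ.filter (fun i : Fin n => ¬ m ≤ (i : ℕ)), a i * c i :=
    (Finset.sum_filter_add_sum_filter_not _ _ _).symm
  have hleft : (∑ i : Fin n, if m ≤ (i : ℕ) then a i else 0) = ∑ i ∈ s, a i := by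
    rw [hs, Finset.sum_filter]
  have hcsum : ∑ i ∈ s, (1 - c i) = ∑ i ∈ Finset.univ.filter (fun i : Fin n => ¬ m ≤ (i : ℕ)), c i := by
    have hcard : (s.card : ℝ) = ((n - m : ℕ) : ℝ) := by
      rw [hs, card_filter_ge hmn.le]
    have htot : ∑ i ∈ s, c i + ∑ i ∈ Finset.univ.filter (fun i : Fin n => ¬ m ≤ (i : ℕ)), c i
        = ((n - m : ℕ) : ℝ) := by
      rw [Finset.sum_filter_add_sum_filter_not, hsum]
    rw [Finset.sum_sub_distrib, Finset.sum_const, nsmul_eq_mul, mul_one, hcard]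
    linarith
  have h1 : ∑ i ∈ s, a i * (1 - c i) ≤ a t * ∑ i ∈ s, (1 - c i) := by
    rw [Finset.mul_sum]
    apply Finset.sum_le_sum
    intro i hi
    have hti : t ≤ i := by
      rw [hs] at hi
      simp only [Finset.mem_filter] at hi
      exact Fin.mk_le_of_le_val hi.2
    exact mul_le_mul_of_nonneg_right (ha hti) (by linarith [hc1 i])
  have h2 : a t * ∑ i ∈ Finset.univ.filter (fun i : Fin n => ¬ m ≤ (i : ℕ)), c i
      ≤ ∑ i ∈ Finset.univ.filter (fun i : Fin n => ¬ m ≤ (i : ℕ)), a i * c i := by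
    rw [Finset.mul_sum]
    apply Finset.sum_le_sum
    intro i hi
    have hti : i ≤ t := by
      simp only [Finset.mem_filter] at hi
      rw [Fin.le_def]
      show (i : ℕ) ≤ m
      omega
    exact mul_le_mul_of_nonneg_right (ha hti) (hc0 i)
  have hexp : ∑ i ∈ s, a i * (1 - c i) = ∑ i ∈ s, a i - ∑ i ∈ s, a i * c i := by
    rw [← Finset.sum_sub_distrib]
    congr 1; funext i; ring
  rw [hleft, hsplit]
  have := h1
  rw [hcsum] at this
  linarith [hexp ▸ this, h2]

lemma vecNorm_pos {n : ℕ} {v : Fin n → ℝ} (hv : v ≠ 0) : 0 < vecNorm v := by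
  rw [vecNorm]
  apply Real.sqrt_pos.2
  obtain ⟨i, hi⟩ : ∃ i, v i ≠ 0 := Function.ne_iff.1 hv
  have hpos : 0 < v i ^ 2 := (sq_nonneg _).lt_of_ne (Ne.symm (pow_ne_zero 2 hi))
  exact Finset.sum_pos' (fun j _ => sq_nonneg _) ⟨i, Finset.mem_univ i, hpos⟩

lemma vecNorm_smul {n : ℕ} (r : ℝ) (v : Fin n → ℝ) : vecNorm (r • v) = |r| * vecNorm v := by
  rw [vecNorm, vecNorm]
  have : (∑ i, (r • v) i ^ 2) = r ^ 2 * ∑ i, v i ^ 2 := by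
    rw [Finset.mul_sum]; congr 1; funext i; simp [mul_pow]
  rw [this, Real.sqrt_mul (sq_nonneg r), Real.sqrt_sq_eq_abs]

lemma spec_LB {n m : ℕ} (hmn : m < n) (U B : Matrix (Fin n) (Fin n) ℝ) (dvec : Fin n → ℝ)
    (hU₁ : Uᵀ * U = 1) (hd : Antitone dvec) (hdpos : ∀ i, 0 < dvec i)
    (hB : B.rank ≤ m) :
    dvec ⟨m, hmn⟩ ≤ specNorm (U * Matrix.diagonal dvec * Uᵀ - B) := by
  classical
  have hm1n : m + 1 ≤ n := hmn
  set ext := Function.ExtendByZero.linearMap ℝ (Fin.castLE hm1n) with hext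
  have hext_apply : ∀ (c : Fin (m+1) → ℝ) (j : Fin (m+1)), ext c (Fin.castLE hm1n j) = c j := by
    intro c j
    simp [hext, Function.ExtendByZero.linearMap_apply,
      Function.Injective.extend_apply (Fin.castLE_injective hm1n)]
  have hext_zero : ∀ (c : Fin (m+1) → ℝ) (i : Fin n), ¬ ((i : ℕ) < m + 1) → ext c i = 0 := by
    intro c i hi
    rw [hext, Function.ExtendByZero.linearMap_apply, Function.extend_apply']
    · rfl
    · rintro ⟨j, rfl⟩; exact hi j.isLt
  have hext_inj : Function.Injective ext := by
    intro c c' hcc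
    funext j
    have := congrFun hcc (Fin.castLE hm1n j)
    rwa [hext_apply, hext_apply] at this
  have hU_inj : Function.Injective U.mulVecLin := by
    intro x y hxy
    have h2 := congrArg (fun z => Uᵀ *ᵥ z) hxy
    simpa [Matrix.mulVecLin_apply, Matrix.mulVec_mulVec, hU₁, Matrix.one_mulVec] using h2
  set V := LinearMap.range (U.mulVecLin ∘ₗ ext) with hV
  set W := LinearMap.ker B.mulVecLin with hW
  have hcomp : Function.Injective ⇑(U.mulVecLin ∘ₗ ext) := by
    rw [LinearMap.coe_comp]; exact hU_inj.comp hext_inj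
  have hVrank : Module.finrank ℝ V = m + 1 := by
    rw [hV, LinearMap.finrank_range_of_inj hcomp, Module.finrank_fin_fun]
  have hWrank : n - m ≤ Module.finrank ℝ W := by
    have h1 := LinearMap.finrank_range_add_finrank_ker B.mulVecLin
    rw [Module.finrank_fin_fun] at h1
    have h2 : Module.finrank ℝ (LinearMap.range B.mulVecLin) ≤ m := hB
    show n - m ≤ Module.finrank ℝ (LinearMap.ker B.mulVecLin)
    omega
  have hinf : 0 < Module.finrank ℝ ↥(V ⊓ W) := by
    have h1 := Submodule.finrank_sup_add_finrank_inf_eq V W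
    have h2 : Module.finrank ℝ ↥(V ⊔ W) ≤ n := by
      have := Submodule.finrank_le (V ⊔ W)
      rwa [Module.finrank_fin_fun] at this
    omega
  have : Nontrivial ↥(V ⊓ W) := Module.nontrivial_of_finrank_pos hinf
  obtain ⟨x, hx⟩ := exists_ne (0 : ↥(V ⊓ W))
  have hv0 : (x : Fin n → ℝ) ≠ 0 := by
    intro h; exact hx (Subtype.ext h)
  set c := vecNorm (x : Fin n → ℝ) with hc
  have hcpos : 0 < c := vecNorm_pos hv0
  set v : Fin n → ℝ := c⁻¹ • (x : Fin n → ℝ) with hvdef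
  have hvnorm : vecNorm v = 1 := by
    rw [hvdef, vecNorm_smul, abs_of_pos (inv_pos.2 hcpos), ← hc, inv_mul_cancel₀ (ne_of_gt hcpos)]
  have hvV : v ∈ V := Submodule.smul_mem _ _ (x.2.1)
  have hvW : v ∈ W := Submodule.smul_mem _ _ (x.2.2)
  obtain ⟨c0, hc0⟩ := hvV
  set w₀ : Fin n → ℝ := ext c0 with hw0
  have hvU : v = U *ᵥ w₀ := by
    rw [← hc0]; rfl
  have hw0norm : vecNorm w₀ = 1 := by
    rw [← vecNorm_mulVec_orth hU₁ w₀, ← hvU, hvnorm]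
  have hBv : B *ᵥ v = 0 := hvW
  set t : Fin n := ⟨m, hmn⟩ with htt
  have key : (U * Matrix.diagonal dvec * Uᵀ - B) *ᵥ v
      = U *ᵥ (Matrix.diagonal dvec *ᵥ w₀) := by
    rw [Matrix.sub_mulVec, hBv, sub_zero, hvU]
    have h1 : Uᵀ *ᵥ (U *ᵥ w₀) = w₀ := by
      rw [Matrix.mulVec_mulVec, hU₁, Matrix.one_mulVec]
    rw [← Matrix.mulVec_mulVec, ← Matrix.mulVec_mulVec, h1]
  have hsq : dvec t ^ 2 ≤ vecNorm ((U * Matrix.diagonal dvec * Uᵀ - B) *ᵥ v) ^ 2 := by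
    rw [key, vecNorm_mulVec_orth hU₁, vecNorm_sq]
    have hw2 : (∑ i, w₀ i ^ 2) = 1 := by
      have := vecNorm_sq w₀; rw [hw0norm] at this; simpa using this.symm
    calc dvec t ^ 2 = ∑ i, dvec t ^ 2 * w₀ i ^ 2 := by rw [← Finset.mul_sum, hw2, mul_one]
      _ ≤ ∑ i, (Matrix.diagonal dvec *ᵥ w₀) i ^ 2 := by
          apply Finset.sum_le_sum
          intro i _
          rw [Matrix.mulVec_diagonal]
          by_cases hi : (i : ℕ) < m + 1
          · have hit : i ≤ t ∨ t ≤ i := le_total i t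
            have hdt : dvec t ≤ dvec i := by
              apply hd
              rw [Fin.le_def]
              show (i : ℕ) ≤ m
              omega
            rw [mul_pow]
            exact mul_le_mul_of_nonneg_right
              (pow_le_pow_left₀ (hdpos t).le hdt 2) (sq_nonneg _)
          · have hwi : w₀ i = 0 := hext_zero c0 i hi
            rw [hwi]
            simp
  have h0 := vecNorm_nonneg ((U * Matrix.diagonal dvec * Uᵀ - B) *ᵥ v)
  have hfin : dvec t ≤ vecNorm ((U * Matrix.diagonal dvec * Uᵀ - B) *ᵥ v) := by
    nlinarith [(hdpos t)]
  exact hfin.trans (specNorm_ge _ v hvnorm)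

lemma dot_mulVec_orth {n : ℕ} {M : Matrix (Fin n) (Fin n) ℝ} (hM : Mᵀ * M = 1)
    (x z : Fin n → ℝ) : (M *ᵥ x) ⬝ᵥ (M *ᵥ z) = x ⬝ᵥ z := by
  rw [Matrix.dotProduct_mulVec, ← Matrix.mulVec_transpose, Matrix.mulVec_mulVec, hM,
    Matrix.one_mulVec]

lemma norm_euc {n : ℕ} (x : EuclideanSpace ℝ (Fin n)) : ‖x‖ = vecNorm x := by
  rw [EuclideanSpace.norm_eq, vecNorm]
  congr 1
  apply Finset.sum_congr rfl
  intro i _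
  rw [Real.norm_eq_abs, sq_abs]

lemma inner_euc {n : ℕ} (x y : EuclideanSpace ℝ (Fin n)) :
    (inner ℝ x y : ℝ) = ∑ i, x i * y i := by
  rw [PiLp.inner_apply]
  simp [RCLike.inner_apply, mul_comm]

lemma frob_LB {n m : ℕ} (hmn : m < n) (U B : Matrix (Fin n) (Fin n) ℝ) (dvec : Fin n → ℝ)
    (hU₁ : Uᵀ * U = 1) (hU₂ : U * Uᵀ = 1) (hd : Antitone dvec) (hdpos : ∀ i, 0 < dvec i)
    (hB : B.rank ≤ m) :
    (∑ j : Fin n, if m ≤ (j : ℕ) then dvec j ^ 2 else 0)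
      ≤ frobNorm (U * Matrix.diagonal dvec * Uᵀ - B) ^ 2 := by
  classical
  have hUt : Uᵀᵀ * Uᵀ = 1 := by rwa [Matrix.transpose_transpose]
  set A := U * Matrix.diagonal dvec * Uᵀ - B with hA
  set W := LinearMap.ker (Matrix.toEuclideanLin B) with hW
  -- dimension of the kernel
  have hWrank : n - m ≤ Module.finrank ℝ W := by
    have h1 := LinearMap.finrank_range_add_finrank_ker (Matrix.toEuclideanLin B)
    rw [finrank_euclideanSpace_fin] at h1
    have h2 : Module.finrank ℝ (LinearMap.range (Matrix.toEuclideanLin B)) = B.rank := by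
      rw [Matrix.rank_eq_finrank_range_toLin B (PiLp.basisFun 2 ℝ (Fin n))
        (PiLp.basisFun 2 ℝ (Fin n)), ← Matrix.toEuclideanLin_eq_toLin]
    rw [hW]
    omega
  set k := Module.finrank ℝ W with hk
  have hk' : n - m ≤ k := hWrank
  set b := stdOrthonormalBasis ℝ W with hb
  set w : Fin (n - m) → EuclideanSpace ℝ (Fin n) := fun j => (b (Fin.castLE hk' j) : _) with hwdef
  have hortho : Orthonormal ℝ w := by
    have h1 : Orthonormal ℝ (fun i : Fin k => ((b i : W) : EuclideanSpace ℝ (Fin n))) := by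
      rw [orthonormal_iff_ite]
      intro i j
      rw [← Submodule.coe_inner]
      exact orthonormal_iff_ite.1 b.orthonormal i j
    exact h1.comp (Fin.castLE hk') (Fin.castLE_injective hk')
  have hker : ∀ j, B *ᵥ (w j) = 0 := by
    intro j
    have h1 : Matrix.toEuclideanLin B (w j) = 0 := (b (Fin.castLE hk' j)).2
    simpa [Matrix.toEuclideanLin_apply] using congrArg WithLp.ofLp h1
  -- Step 1 : Bessel bound
  have step1 : ∑ j : Fin (n - m), vecNorm (A *ᵥ w j) ^ 2 ≤ frobNorm A ^ 2 := by
    rw [frobNorm_sq]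
    have hswap : ∑ j : Fin (n - m), vecNorm (A *ᵥ w j) ^ 2
        = ∑ i : Fin n, ∑ j : Fin (n - m), (A *ᵥ w j) i ^ 2 := by
      rw [Finset.sum_comm]
      apply Finset.sum_congr rfl
      intro j _
      rw [vecNorm_sq]
    rw [hswap]
    apply Finset.sum_le_sum
    intro i _
    set row : EuclideanSpace ℝ (Fin n) := WithLp.toLp 2 (fun t => A i t) with hrow
    have hbes := hortho.sum_inner_products_le (x := row) (s := Finset.univ)
    have hnorm : ‖row‖ ^ 2 = ∑ t, A i t ^ 2 := by
      rw [norm_euc, vecNorm_sq]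
    rw [hnorm] at hbes
    refine le_trans (le_of_eq ?_) hbes
    apply Finset.sum_congr rfl
    intro j _
    rw [inner_euc, Real.norm_eq_abs, sq_abs]
    congr 1
    rw [Matrix.mulVec, dotProduct]
    simp only [hrow]
    apply Finset.sum_congr rfl
    intro t _
    ring
  -- Step 2 : lower bound via kernel
  set y : Fin (n - m) → EuclideanSpace ℝ (Fin n) := fun j => WithLp.toLp 2 (Uᵀ *ᵥ w j) with hydef
  have hyortho : Orthonormal ℝ y := by
    rw [orthonormal_iff_ite]
    intro i j
    rw [inner_euc]
    have h1 : (∑ t, y i t * y j t) = (Uᵀ *ᵥ w i) ⬝ᵥ (Uᵀ *ᵥ w j) := rfl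
    rw [h1, dot_mulVec_orth hUt]
    have h2 : (w i) ⬝ᵥ (w j) = (inner ℝ (w i) (w j) : ℝ) := by
      rw [inner_euc]; rfl
    rw [h2, orthonormal_iff_ite.1 hortho i j]
  have hynorm : ∀ j, vecNorm (y j) = 1 := by
    intro j
    rw [hydef]
    rw [vecNorm_mulVec_orth hUt]
    rw [← norm_euc, hortho.1 j]
  set c : Fin n → ℝ := fun i => ∑ j : Fin (n - m), y j i ^ 2 with hcdef
  have hc0 : ∀ i, 0 ≤ c i := fun i => Finset.sum_nonneg fun j _ => sq_nonneg _
  have hc1 : ∀ i, c i ≤ 1 := by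
    intro i
    have hbes := hyortho.sum_inner_products_le
      (x := EuclideanSpace.single i 1) (s := Finset.univ)
    rw [EuclideanSpace.norm_single, norm_one, one_pow] at hbes
    refine le_trans (le_of_eq ?_) hbes
    apply Finset.sum_congr rfl
    intro j _
    rw [inner_euc, Real.norm_eq_abs, sq_abs]
    congr 1
    rw [Finset.sum_eq_single i]
    · simp [EuclideanSpace.single_apply]
    · intro t _ ht; simp [EuclideanSpace.single_apply, ht]
    · simp
  have hcsum : ∑ i, c i = ((n - m : ℕ) : ℝ) := by
    rw [hcdef]
    rw [Finset.sum_comm]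
    have h1 : ∀ j : Fin (n - m), (∑ i, y j i ^ 2) = 1 := by
      intro j
      have := vecNorm_sq (y j)
      rw [hynorm j, one_pow] at this
      exact this.symm
    simp [h1]
  have step2 : (∑ i : Fin n, if m ≤ (i : ℕ) then dvec i ^ 2 else 0)
      ≤ ∑ j : Fin (n - m), vecNorm (A *ᵥ w j) ^ 2 := by
    have hAw : ∀ j, A *ᵥ w j = U *ᵥ (Matrix.diagonal dvec *ᵥ y j) := by
      intro j
      rw [hA, Matrix.sub_mulVec, hker j, sub_zero, ← Matrix.mulVec_mulVec,
        ← Matrix.mulVec_mulVec]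
    have hval : ∀ j, vecNorm (A *ᵥ w j) ^ 2 = ∑ i, dvec i ^ 2 * y j i ^ 2 := by
      intro j
      rw [hAw j, vecNorm_mulVec_orth hU₁, vecNorm_sq]
      apply Finset.sum_congr rfl
      intro i _
      rw [Matrix.mulVec_diagonal]
      ring
    calc (∑ i : Fin n, if m ≤ (i : ℕ) then dvec i ^ 2 else 0)
        ≤ ∑ i, dvec i ^ 2 * c i := by
          apply weight_lemma hmn _ _ ?_ (fun i => sq_nonneg _) hc0 hc1 hcsum
          intro i j hij
          exact pow_le_pow_left₀ (hdpos j).le (hd hij) 2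
      _ = ∑ i : Fin n, ∑ j : Fin (n - m), dvec i ^ 2 * y j i ^ 2 := by
          apply Finset.sum_congr rfl
          intro i _
          rw [hcdef, Finset.mul_sum]
      _ = ∑ j : Fin (n - m), ∑ i : Fin n, dvec i ^ 2 * y j i ^ 2 := Finset.sum_comm
      _ = ∑ j : Fin (n - m), vecNorm (A *ᵥ w j) ^ 2 := by
          apply Finset.sum_congr rfl
          intro j _
          rw [hval j]
  exact step2.trans step1

/-- Eckart–Young, as used: let `K = U D Uᵀ` be a spectral decomposition of
a symmetric positive definite `n × n` matrix, with `U` orthogonal and the diagonal entries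
`dvec` of `D` positive and in descending order.  For `1 ≤ m < n` let
`Km = U_m D_m U_mᵀ`, where `U_m` consists of the first `m` columns of `U` and `D_m` is the
top-left `m × m` block of `D`.  Then for every `n × n` matrix `B` of rank at most `m`,
`‖K − Km‖₂ ≤ ‖K − B‖₂` and `‖K − Km‖_F ≤ ‖K − B‖_F`; moreover
`‖K − Km‖₂ = d(m+1, m+1)` (0-indexed: `dvec ⟨m, _⟩`) and
`‖K − Km‖_F² = ∑_{j=m+1}^n d(j,j)²` (0-indexed: the sum of `dvec j ^ 2` over `j ≥ m`). -/
theorem stmt15 (n m : ℕ) (hm1 : 1 ≤ m) (hmn : m < n)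
    (K U : Matrix (Fin n) (Fin n) ℝ) (dvec : Fin n → ℝ)
    (hU₁ : Uᵀ * U = 1) (hU₂ : U * Uᵀ = 1)
    (hd : Antitone dvec) (hdpos : ∀ i, 0 < dvec i)
    (hK : K = U * Matrix.diagonal dvec * Uᵀ)
    (Um : Matrix (Fin n) (Fin m) ℝ) (hUm : Um = U.submatrix id (Fin.castLE hmn.le))
    (Dm : Matrix (Fin m) (Fin m) ℝ)
    (hDm : Dm = Matrix.diagonal fun i : Fin m => dvec (Fin.castLE hmn.le i))
    (Km : Matrix (Fin n) (Fin n) ℝ) (hKm : Km = Um * Dm * Umᵀ) :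
    (∀ B : Matrix (Fin n) (Fin n) ℝ, B.rank ≤ m →
        specNorm (K - Km) ≤ specNorm (K - B) ∧ frobNorm (K - Km) ≤ frobNorm (K - B)) ∧
      specNorm (K - Km) = dvec ⟨m, hmn⟩ ∧
      frobNorm (K - Km) ^ 2 = ∑ j : Fin n, (if m ≤ (j : ℕ) then dvec j ^ 2 else 0) := by
  have hdiff : K - Km
      = U * Matrix.diagonal (fun i : Fin n => if m ≤ (i : ℕ) then dvec i else 0) * Uᵀ :=
    KmKdiff hmn K U dvec hK Um hUm Dm hDm Km hKm
  set e : Fin n → ℝ := fun i : Fin n => if m ≤ (i : ℕ) then dvec i else 0 with he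
  have he0 : ∀ i, 0 ≤ e i := by
    intro i
    by_cases h : m ≤ (i : ℕ) <;> simp [he, h, (hdpos i).le]
  have hejm : e ⟨m, hmn⟩ = dvec ⟨m, hmn⟩ := by simp [he]
  have hle : ∀ i, e i ≤ e ⟨m, hmn⟩ := by
    intro i
    rw [hejm]
    by_cases h : m ≤ (i : ℕ)
    · have : (⟨m, hmn⟩ : Fin n) ≤ i := by rw [Fin.le_def]; exact h
      simpa [he, h] using hd this
    · simp [he, h, (hdpos _).le]
  have hspec : specNorm (K - Km) = dvec ⟨m, hmn⟩ := by
    rw [hdiff, spec_conj_diag U hU₁ hU₂ e ⟨m, hmn⟩ he0 hle, hejm]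
  have hfrob : frobNorm (K - Km) ^ 2
      = ∑ j : Fin n, (if m ≤ (j : ℕ) then dvec j ^ 2 else 0) := by
    rw [hdiff]
    have h1 : U * Matrix.diagonal e * Uᵀ
        = U * Matrix.diagonal e * Uᵀ := rfl
    rw [frob_conj hU₁ (Matrix.diagonal e), frobSq_diag]
    apply Finset.sum_congr rfl
    intro i _
    by_cases h : m ≤ (i : ℕ) <;> simp [he, h]
  refine ⟨?_, hspec, hfrob⟩
  intro B hB
  have hKB : K - B = U * Matrix.diagonal dvec * Uᵀ - B := by rw [hK]
  constructor
  · rw [hspec, hKB]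
    exact spec_LB hmn U B dvec hU₁ hd hdpos hB
  · have h1 : frobNorm (K - Km) ^ 2 ≤ frobNorm (K - B) ^ 2 := by
      rw [hfrob, hKB]
      exact frob_LB hmn U B dvec hU₁ hU₂ hd hdpos hB
    have h2 := frobNorm_nonneg (K - Km)
    have h3 := frobNorm_nonneg (K - B)
    nlinarith


end
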